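/- Let τ > 0 and let A ∈ ℝ^{d×n} have SVD A = UΣVᵀ with singular values σ₁ ≥ ... ≥ σ_n ≥ 0. Then the singular value thresholding operator S_τ(A) = U·diag(max(σᵢ − τ, 0))·Vᵀ is the unique minimizer of X ↦ τ‖X‖_* + (1/2)‖X − A‖_F², where ‖X‖_* denotes the nuclear norm (sum of singular values). -/

import Mathlib

open Matrix

noncomputable def frob {d n : ℕ} (M : Matrix (Fin d) (Fin n) ℝ) : ℝ :=
  Real.sqrt (∑ i, ∑ j, (M i j) ^ 2)

/-- The nuclear norm of a matrix: the sum of its singular values, i.e. the sum of the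
square roots of the eigenvalues of XᴴX. -/
noncomputable def nuclearNorm {d n : ℕ} (X : Matrix (Fin d) (Fin n) ℝ) : ℝ :=
  ∑ i, Real.sqrt ((show (Xᵀ * X).IsHermitian by
    simpa [Matrix.conjTranspose_eq_transpose_of_trivial] using
      Matrix.isHermitian_conjTranspose_mul_self X).eigenvalues i)

lemma Matrix.isHermitian_transpose_mul_self {d n : ℕ} (X : Matrix (Fin d) (Fin n) ℝ) :
    (Xᵀ * X).IsHermitian := by
  simpa [Matrix.conjTranspose_eq_transpose_of_trivial] using
    Matrix.isHermitian_conjTranspose_mul_self X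

/-! ### Auxiliary material -/

noncomputable def ip {d n : ℕ} (M N : Matrix (Fin d) (Fin n) ℝ) : ℝ :=
  ∑ i, ∑ j, M i j * N i j

lemma ip_eq_trace {d n : ℕ} (M N : Matrix (Fin d) (Fin n) ℝ) :
    ip M N = Matrix.trace (Mᵀ * N) := by
  simp only [ip, Matrix.trace, Matrix.diag_apply, Matrix.mul_apply, transpose_apply]
  rw [Finset.sum_comm]

lemma dot_mulVec_self {d n : ℕ} (X : Matrix (Fin d) (Fin n) ℝ) (v : Fin n → ℝ) :
    (X *ᵥ v) ⬝ᵥ (X *ᵥ v) = v ⬝ᵥ ((Xᵀ * X) *ᵥ v) := by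
  conv_rhs => rw [← Matrix.mulVec_mulVec, Matrix.dotProduct_mulVec, Matrix.vecMul_transpose]

lemma dot_self_nonneg' {m : ℕ} (u : Fin m → ℝ) : 0 ≤ u ⬝ᵥ u :=
  Finset.sum_nonneg fun a _ => mul_self_nonneg _

noncomputable def Qm {n : ℕ} {M : Matrix (Fin n) (Fin n) ℝ} (hM : M.IsHermitian) :
    Matrix (Fin n) (Fin n) ℝ := fun a i => hM.eigenvectorBasis i a

lemma Qm_tmul {n : ℕ} {M : Matrix (Fin n) (Fin n) ℝ} (hM : M.IsHermitian) :
    (Qm hM)ᵀ * Qm hM = 1 := by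
  ext i j
  have h := (orthonormal_iff_ite.mp hM.eigenvectorBasis.orthonormal) i j
  simp only [PiLp.inner_apply, RCLike.inner_apply, starRingEnd_apply, star_trivial] at h
  simp only [Matrix.mul_apply, transpose_apply, Qm, Matrix.one_apply, mul_comm]
  simpa [mul_comm] using h

lemma Qm_mult {n : ℕ} {M : Matrix (Fin n) (Fin n) ℝ} (hM : M.IsHermitian) :
    Qm hM * (Qm hM)ᵀ = 1 := mul_eq_one_comm.mp (Qm_tmul hM)

lemma mul_Qm_col {n : ℕ} {M : Matrix (Fin n) (Fin n) ℝ} (hM : M.IsHermitian)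
    {d : ℕ} (W : Matrix (Fin d) (Fin n) ℝ) (i : Fin n) (a : Fin d) :
    (W * Qm hM) a i = (W *ᵥ ⇑(hM.eigenvectorBasis i)) a := rfl

lemma qdot_one {n : ℕ} {M : Matrix (Fin n) (Fin n) ℝ} (hM : M.IsHermitian) (i : Fin n) :
    ⇑(hM.eigenvectorBasis i) ⬝ᵥ ⇑(hM.eigenvectorBasis i) = 1 := by
  have := congrFun (congrFun (Qm_tmul hM) i) i
  simpa [Matrix.mul_apply, Matrix.one_apply, dotProduct, Qm, transpose_apply] using this

lemma Qm_diag {n : ℕ} {M : Matrix (Fin n) (Fin n) ℝ} (hM : M.IsHermitian) :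
    (Qm hM)ᵀ * M * Qm hM = diagonal hM.eigenvalues := by
  have h := hM.conjStarAlgAut_star_eigenvectorUnitary
  rw [Unitary.conjStarAlgAut_star_apply] at h
  have hQ : (Matrix.IsHermitian.eigenvectorUnitary hM : Matrix (Fin n) (Fin n) ℝ) = Qm hM := by
    ext a i; simp [Qm]
  rw [hQ, Matrix.star_eq_conjTranspose,
    Matrix.conjTranspose_eq_transpose_of_trivial] at h
  simpa using h

lemma trace_expand {d n : ℕ} {M : Matrix (Fin n) (Fin n) ℝ} (hM : M.IsHermitian)
    (W X : Matrix (Fin d) (Fin n) ℝ) :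
    ip W X = ∑ i, (W *ᵥ ⇑(hM.eigenvectorBasis i)) ⬝ᵥ (X *ᵥ ⇑(hM.eigenvectorBasis i)) := by
  rw [ip_eq_trace]
  have h2 : Matrix.trace ((W * Qm hM)ᵀ * (X * Qm hM)) = Matrix.trace (Wᵀ * X) := by
    calc Matrix.trace ((W * Qm hM)ᵀ * (X * Qm hM))
        = Matrix.trace (((Qm hM)ᵀ * Wᵀ) * (X * Qm hM)) := by rw [transpose_mul]
      _ = Matrix.trace ((X * Qm hM) * ((Qm hM)ᵀ * Wᵀ)) := Matrix.trace_mul_comm _ _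
      _ = Matrix.trace ((X * (Qm hM * (Qm hM)ᵀ)) * Wᵀ) := by simp only [Matrix.mul_assoc]
      _ = Matrix.trace (X * Wᵀ) := by rw [Qm_mult, Matrix.mul_one]
      _ = Matrix.trace (Wᵀ * X) := Matrix.trace_mul_comm _ _
  rw [← h2]
  simp only [Matrix.trace, Matrix.diag_apply]
  refine Finset.sum_congr rfl fun i _ => ?_
  rw [Matrix.mul_apply]
  simp only [dotProduct, transpose_apply]
  exact Finset.sum_congr rfl fun a _ => by rw [mul_Qm_col hM W i a, mul_Qm_col hM X i a]

lemma eigen_mulVec {d n : ℕ} (X : Matrix (Fin d) (Fin n) ℝ) (i : Fin n) :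
    (Xᵀ * X) *ᵥ ⇑((Matrix.isHermitian_transpose_mul_self X).eigenvectorBasis i)
      = (Matrix.isHermitian_transpose_mul_self X).eigenvalues i •
        ⇑((Matrix.isHermitian_transpose_mul_self X).eigenvectorBasis i) := by
  exact (Matrix.isHermitian_transpose_mul_self X).mulVec_eigenvectorBasis i

lemma eigenvalue_eq_dot {d n : ℕ} (X : Matrix (Fin d) (Fin n) ℝ) (i : Fin n) :
    (X *ᵥ ⇑((Matrix.isHermitian_transpose_mul_self X).eigenvectorBasis i)) ⬝ᵥ
      (X *ᵥ ⇑((Matrix.isHermitian_transpose_mul_self X).eigenvectorBasis i))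
      = (Matrix.isHermitian_transpose_mul_self X).eigenvalues i := by
  rw [dot_mulVec_self, eigen_mulVec, dotProduct_smul, smul_eq_mul,
    qdot_one (Matrix.isHermitian_transpose_mul_self X) i, mul_one]

lemma eigenvalue_nonneg {d n : ℕ} (X : Matrix (Fin d) (Fin n) ℝ) (i : Fin n) :
    0 ≤ (Matrix.isHermitian_transpose_mul_self X).eigenvalues i := by
  rw [← eigenvalue_eq_dot]; exact dot_self_nonneg' _

/-- If `‖W v‖² ≤ τ² ‖v‖²` for all `v`, then `⟨W, X⟩ ≤ τ ‖X‖_*`. -/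
lemma dual_bound {d n : ℕ} {τ : ℝ} (hτ : 0 ≤ τ) (W X : Matrix (Fin d) (Fin n) ℝ)
    (hW : ∀ v : Fin n → ℝ, (W *ᵥ v) ⬝ᵥ (W *ᵥ v) ≤ τ ^ 2 * (v ⬝ᵥ v)) :
    ip W X ≤ τ * nuclearNorm X := by
  rw [trace_expand (Matrix.isHermitian_transpose_mul_self X) W X, nuclearNorm, Finset.mul_sum]
  refine Finset.sum_le_sum fun i _ => ?_
  set hM := Matrix.isHermitian_transpose_mul_self X with hMdef
  set u := W *ᵥ ⇑(hM.eigenvectorBasis i) with hu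
  set v := X *ᵥ ⇑(hM.eigenvectorBasis i) with hv
  have cs : (u ⬝ᵥ v) ^ 2 ≤ (u ⬝ᵥ u) * (v ⬝ᵥ v) := by
    have := Finset.sum_mul_sq_le_sq_mul_sq Finset.univ u v
    simpa [dotProduct, sq] using this
  have hub : u ⬝ᵥ u ≤ τ ^ 2 := by
    have := hW ⇑(hM.eigenvectorBasis i)
    rwa [qdot_one hM i, mul_one] at this
  calc u ⬝ᵥ v ≤ |u ⬝ᵥ v| := le_abs_self _
    _ = Real.sqrt ((u ⬝ᵥ v) ^ 2) := (Real.sqrt_sq_eq_abs _).symm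
    _ ≤ Real.sqrt (τ ^ 2 * hM.eigenvalues i) := by
        apply Real.sqrt_le_sqrt
        calc (u ⬝ᵥ v) ^ 2 ≤ (u ⬝ᵥ u) * (v ⬝ᵥ v) := cs
          _ = (u ⬝ᵥ u) * hM.eigenvalues i := by rw [hv, eigenvalue_eq_dot X i]
          _ ≤ τ ^ 2 * hM.eigenvalues i :=
              mul_le_mul_of_nonneg_right hub (eigenvalue_nonneg X i)
    _ = τ * Real.sqrt (hM.eigenvalues i) := by
        rw [Real.sqrt_mul (sq_nonneg τ), Real.sqrt_sq hτ]

lemma tmul_UDV {d n : ℕ} (U : Matrix (Fin d) (Fin n) ℝ) (V : Matrix (Fin n) (Fin n) ℝ)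
    (hU : Uᵀ * U = 1) (c e : Fin n → ℝ) :
    (U * diagonal c * Vᵀ)ᵀ * (U * diagonal e * Vᵀ)
      = V * diagonal (fun j => c j * e j) * Vᵀ := by
  calc (U * diagonal c * Vᵀ)ᵀ * (U * diagonal e * Vᵀ)
      = V * diagonal c * (Uᵀ * U) * (diagonal e * Vᵀ) := by
        simp only [transpose_mul, transpose_transpose, diagonal_transpose, Matrix.mul_assoc]
    _ = V * (diagonal c * diagonal e) * Vᵀ := by
        rw [hU, Matrix.mul_one]; simp only [Matrix.mul_assoc]
    _ = V * diagonal (fun j => c j * e j) * Vᵀ := by rw [diagonal_mul_diagonal]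

lemma ip_UDV {d n : ℕ} (U : Matrix (Fin d) (Fin n) ℝ) (V : Matrix (Fin n) (Fin n) ℝ)
    (hU : Uᵀ * U = 1) (hV : Vᵀ * V = 1) (c e : Fin n → ℝ) :
    ip (U * diagonal c * Vᵀ) (U * diagonal e * Vᵀ) = ∑ j, c j * e j := by
  rw [ip_eq_trace, tmul_UDV U V hU c e, Matrix.trace_mul_cycle, hV, Matrix.one_mul,
    Matrix.trace_diagonal]

/-- Nuclear norm of `U * diagonal μ * Vᵀ` for nonnegative `μ`. -/
lemma nn_UDV {d n : ℕ} (U : Matrix (Fin d) (Fin n) ℝ) (V : Matrix (Fin n) (Fin n) ℝ)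
    (μ : Fin n → ℝ) (hμ : ∀ i, 0 ≤ μ i) (hU : Uᵀ * U = 1) (hV : Vᵀ * V = 1) :
    nuclearNorm (U * diagonal μ * Vᵀ) = ∑ j, μ j := by
  set M := U * diagonal μ * Vᵀ with hMdef
  set hH := Matrix.isHermitian_transpose_mul_self M with hHdef
  set lam := hH.eigenvalues with hlamdef
  have hVVt : V * Vᵀ = 1 := mul_eq_one_comm.mp hV
  have hMtM : Mᴴ * M = V * diagonal (fun j => μ j * μ j) * Vᵀ := by
    rw [Matrix.conjTranspose_eq_transpose_of_trivial, hMdef]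
    exact tmul_UDV U V hU μ μ
  obtain ⟨P, hPdef⟩ : ∃ P, P = Vᵀ * Qm hH := ⟨_, rfl⟩
  have hPtP : Pᵀ * P = 1 := by
    rw [hPdef, transpose_mul, transpose_transpose]
    calc (Qm hH)ᵀ * V * (Vᵀ * Qm hH) = (Qm hH)ᵀ * (V * Vᵀ) * Qm hH := by
          simp only [Matrix.mul_assoc]
      _ = 1 := by rw [hVVt, Matrix.mul_one, Qm_tmul]
  have hPPt : P * Pᵀ = 1 := mul_eq_one_comm.mp hPtP
  have hPdiag : Pᵀ * (diagonal (fun j => μ j * μ j) * P) = diagonal lam := by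
    calc Pᵀ * (diagonal (fun j => μ j * μ j) * P)
        = (Qm hH)ᵀ * ((V * diagonal (fun j => μ j * μ j) * Vᵀ) * Qm hH) := by
          rw [hPdef]; simp only [transpose_mul, transpose_transpose, Matrix.mul_assoc]
      _ = (Qm hH)ᵀ * ((Mᴴ * M) * Qm hH) := by rw [← hMtM]
      _ = diagonal lam := by rw [← Matrix.mul_assoc]; exact Qm_diag hH
  have hDP : diagonal (fun j => μ j * μ j) * P = P * diagonal lam := by
    calc diagonal (fun j => μ j * μ j) * P
        = P * (Pᵀ * (diagonal (fun j => μ j * μ j) * P)) := by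
          rw [← Matrix.mul_assoc, hPPt, Matrix.one_mul]
      _ = P * diagonal lam := by rw [hPdiag]
  have hentry : ∀ i j, μ j * μ j * P j i = P j i * lam i := by
    intro i j
    have := congrFun (congrFun hDP j) i
    simpa [Matrix.diagonal_mul, Matrix.mul_diagonal] using this
  have hrow : ∀ j, ∑ i, P j i * P j i = 1 := by
    intro j
    have := congrFun (congrFun hPPt j) j
    simpa [Matrix.mul_apply, Matrix.one_apply] using this
  have hcol : ∀ i, ∑ j, P j i * P j i = 1 := by
    intro i
    have := congrFun (congrFun hPtP i) i
    simpa [Matrix.mul_apply, Matrix.one_apply] using this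
  have hsqrt : ∀ i, Real.sqrt (lam i) = ∑ j, μ j * (P j i * P j i) := by
    intro i
    have : ∀ j, μ j * (P j i * P j i) = Real.sqrt (lam i) * (P j i * P j i) := by
      intro j
      by_cases h : P j i = 0
      · rw [h]; ring
      · have heq : μ j * μ j = lam i := by
          have h2 := hentry i j
          have h3 : μ j * μ j * P j i = lam i * P j i := by rw [h2]; ring
          exact mul_right_cancel₀ h h3
        rw [← heq, Real.sqrt_mul_self (hμ j)]
    rw [Finset.sum_congr rfl fun j _ => this j, ← Finset.mul_sum, hcol i, mul_one]
  have : nuclearNorm M = ∑ i, Real.sqrt (lam i) := rfl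
  rw [this, Finset.sum_congr rfl fun i _ => hsqrt i, Finset.sum_comm]
  refine Finset.sum_congr rfl fun j _ => ?_
  rw [← Finset.mul_sum, hrow j, mul_one]

lemma frob_sq_eq_ip {d n : ℕ} (M : Matrix (Fin d) (Fin n) ℝ) :
    (frob M) ^ 2 = ip M M := by
  rw [frob, Real.sq_sqrt (by positivity)]
  simp only [ip, sq]

lemma ip_expand_sub {d n : ℕ} (X A S : Matrix (Fin d) (Fin n) ℝ) :
    ip (X - A) (X - A) = ip (S - A) (S - A) + ip (X - S) (X - S) + 2 * ip (X - S) (S - A) := by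
  simp only [ip, Matrix.sub_apply, Finset.mul_sum, ← Finset.sum_add_distrib]
  exact Finset.sum_congr rfl fun i _ => Finset.sum_congr rfl fun j _ => by ring

lemma ip_cross {d n : ℕ} (X A S : Matrix (Fin d) (Fin n) ℝ) :
    ip (X - S) (S - A) = ip (A - S) S - ip (A - S) X := by
  simp only [ip, Matrix.sub_apply, ← Finset.sum_sub_distrib]
  exact Finset.sum_congr rfl fun i _ => Finset.sum_congr rfl fun j _ => by ring

lemma ip_self_pos {d n : ℕ} {X S : Matrix (Fin d) (Fin n) ℝ} (h : X ≠ S) :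
    0 < ip (X - S) (X - S) := by
  obtain ⟨i, j, hij⟩ : ∃ i j, X i j ≠ S i j := by
    by_contra hc
    push_neg at hc
    exact h (by ext i j; exact hc i j)
  have hpos : 0 < (X - S) i j * (X - S) i j := by
    have : (X - S) i j ≠ 0 := sub_ne_zero_of_ne hij
    exact mul_self_pos.mpr this
  refine Finset.sum_pos' (fun a _ => Finset.sum_nonneg fun b _ => mul_self_nonneg _)
    ⟨i, Finset.mem_univ i, ?_⟩
  exact Finset.sum_pos' (fun b _ => mul_self_nonneg _) ⟨j, Finset.mem_univ j, hpos⟩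

/-- singular value thresholding S_τ(A) = U diag(max(σᵢ−τ,0)) Vᵀ is the unique
minimizer of X ↦ τ‖X‖_* + (1/2)‖X − A‖_F². -/
theorem stmt3 {d n : ℕ} (hdn : d ≥ n) (τ : ℝ) (hτ : 0 < τ)
    (A : Matrix (Fin d) (Fin n) ℝ)
    (U : Matrix (Fin d) (Fin n) ℝ) (V : Matrix (Fin n) (Fin n) ℝ)
    (σ : Fin n → ℝ) (hσ : ∀ i, 0 ≤ σ i) (hσmono : Antitone σ)
    (hU : Uᵀ * U = 1) (hV : Vᵀ * V = 1)
    (hA : A = U * Matrix.diagonal σ * Vᵀ)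
    (S : Matrix (Fin d) (Fin n) ℝ)
    (hS : S = U * Matrix.diagonal (fun i => max (σ i - τ) 0) * Vᵀ) :
    ∀ X : Matrix (Fin d) (Fin n) ℝ, X ≠ S →
      τ * nuclearNorm S + (1 / 2) * (frob (S - A)) ^ 2 <
        τ * nuclearNorm X + (1 / 2) * (frob (X - A)) ^ 2 := by
  intro X hXS
  set μ : Fin n → ℝ := fun i => max (σ i - τ) 0 with hμdef
  set m : Fin n → ℝ := fun i => σ i - μ i with hmdef
  have hμ0 : ∀ i, 0 ≤ μ i := fun i => le_max_right _ _
  have hm0 : ∀ i, 0 ≤ m i := by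
    intro i
    rcases le_total (σ i) τ with h | h
    · simp only [hmdef, hμdef, max_eq_right (by linarith : σ i - τ ≤ 0)]
      linarith [hσ i]
    · simp only [hmdef, hμdef, max_eq_left (by linarith : (0:ℝ) ≤ σ i - τ)]
      linarith
  have hmτ : ∀ i, m i ≤ τ := by
    intro i
    rcases le_total (σ i) τ with h | h
    · simp only [hmdef, hμdef, max_eq_right (by linarith : σ i - τ ≤ 0)]
      linarith
    · simp only [hmdef, hμdef, max_eq_left (by linarith : (0:ℝ) ≤ σ i - τ)]
      linarith
  have hmμ : ∀ i, m i * μ i = τ * μ i := by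
    intro i
    rcases le_total (σ i) τ with h | h
    · simp only [hmdef, hμdef, max_eq_right (by linarith : σ i - τ ≤ 0)]
      ring
    · simp only [hmdef, hμdef, max_eq_left (by linarith : (0:ℝ) ≤ σ i - τ)]
      ring
  -- A - S = U * diagonal m * Vᵀ
  have hW : A - S = U * diagonal m * Vᵀ := by
    rw [hA, hS, ← Matrix.sub_mul, ← Matrix.mul_sub, ← Matrix.diagonal_sub]
  -- operator norm bound on A - S
  have hWop : ∀ v : Fin n → ℝ, ((A - S) *ᵥ v) ⬝ᵥ ((A - S) *ᵥ v) ≤ τ ^ 2 * (v ⬝ᵥ v) := by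
    intro v
    rw [dot_mulVec_self, hW, tmul_UDV U V hU m m]
    have hVv : (Vᵀ *ᵥ v) ⬝ᵥ (Vᵀ *ᵥ v) = v ⬝ᵥ v := by
      rw [dot_mulVec_self, transpose_transpose, mul_eq_one_comm.mp hV, Matrix.one_mulVec]
    calc v ⬝ᵥ ((V * diagonal (fun j => m j * m j) * Vᵀ) *ᵥ v)
        = (Vᵀ *ᵥ v) ⬝ᵥ (diagonal (fun j => m j * m j) *ᵥ (Vᵀ *ᵥ v)) := by
          rw [← Matrix.mulVec_mulVec, ← Matrix.mulVec_mulVec, Matrix.dotProduct_mulVec v,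
            ← Matrix.mulVec_transpose]
      _ = ∑ j, (m j * m j) * ((Vᵀ *ᵥ v) j * (Vᵀ *ᵥ v) j) := by
          simp only [dotProduct, Matrix.mulVec_diagonal]
          exact Finset.sum_congr rfl fun j _ => by ring
      _ ≤ ∑ j, τ ^ 2 * ((Vᵀ *ᵥ v) j * (Vᵀ *ᵥ v) j) := by
          refine Finset.sum_le_sum fun j _ => ?_
          have h1 : m j * m j ≤ τ ^ 2 := by
            have := mul_le_mul (hmτ j) (hmτ j) (hm0 j) (le_of_lt hτ)
            nlinarith [hm0 j, hmτ j]
          exact mul_le_mul_of_nonneg_right h1 (mul_self_nonneg _)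
      _ = τ ^ 2 * ((Vᵀ *ᵥ v) ⬝ᵥ (Vᵀ *ᵥ v)) := by rw [← Finset.mul_sum]; rfl
      _ = τ ^ 2 * (v ⬝ᵥ v) := by rw [hVv]
  -- key inequality for X
  have key : ip (A - S) X ≤ τ * nuclearNorm X := dual_bound (le_of_lt hτ) (A - S) X hWop
  -- nuclear norm of S
  have hnnS : nuclearNorm S = ∑ j, μ j := by rw [hS]; exact nn_UDV U V μ hμ0 hU hV
  -- inner product of (A - S) with S
  have keyS : ip (A - S) S = τ * nuclearNorm S := by
    rw [hnnS, hW, hS, ip_UDV U V hU hV m μ, Finset.mul_sum]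
    exact Finset.sum_congr rfl fun j _ => hmμ j
  have hpos : 0 < ip (X - S) (X - S) := ip_self_pos hXS
  have hexp := ip_expand_sub X A S
  have hcross := ip_cross X A S
  rw [frob_sq_eq_ip, frob_sq_eq_ip]
  linarith
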